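/- Let ι be a type and p₁, p₂, p₃, p₄ ≥ 0 with p₁ + p₂ + p₃ ≤ 1. Let μ₁, μ₂, μ₃ be probability mass functions on Finset ι that are locally decaying with rates p₁, p₂, p₃, and let μ₄ be a probability mass function on Finset (ι × Bool) that is locally decaying with rate p₄; consider the product distribution on quadruples (S_D, S_A, F, S_M) (i.e., all four random subsets are independent). Model the qubits of the two code blocks as ι × Bool and define the total output error support S = ((S_D ∪ S_A ∪ F) ×ˢ {false, true}) ∪ S_M. Then for every finite subset E of ι × Bool, the probability that E ⊆ S is at most (Real.sqrt (p₁ + p₂ + p₃) + p₄)^{E.card}. That is, the effective error on the two blocks after the faulty transversal Bell-measurement circuit is locally decaying with rate p_eff = √(p₁+p₂+p₃) + p₄. -/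

import Mathlib

open scoped ENNReal

/-- A probability mass function `μ` on finite subsets of `ι` is *locally decaying*
with rate `τ` if for every finite `B ⊆ ι` the probability that `B` is contained in
the random subset is at most `τ ^ |B|`. -/
def LocallyDecaying {ι : Type*} [DecidableEq ι] (μ : PMF (Finset ι)) (τ : ℝ) : Prop :=
  ∀ B : Finset ι,
    (∑' S : Finset ι, if B ⊆ S then μ S else 0) ≤ ENNReal.ofReal (τ ^ B.card)

private lemma ind_mul_ind {p q : Prop} [Decidable p] [Decidable q] (x y : ℝ≥0∞) :
    (if p ∧ q then x * y else 0) = (if p then x else 0) * (if q then y else 0) := by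
  by_cases hp : p <;> by_cases hq : q <;> simp [hp, hq]

private lemma tsum_finsetSum {α κ : Type*} (s : Finset κ) (f : κ → α → ℝ≥0∞) :
    (∑' a, ∑ k ∈ s, f k a) = ∑ k ∈ s, ∑' a, f k a :=
  Summable.tsum_finsetSum fun _ _ => ENNReal.summable

private lemma tsum_ind_mul₃ {α β γ : Type*} (f : α → ℝ≥0∞) (g : β → ℝ≥0∞) (h : γ → ℝ≥0∞)
    (p : α → Prop) [DecidablePred p] (q : β → Prop) [DecidablePred q]
    (r : γ → Prop) [DecidablePred r] :
    (∑' a, ∑' b, ∑' c, if p a ∧ q b ∧ r c then f a * g b * h c else 0)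
      = (∑' a, if p a then f a else 0) * ((∑' b, if q b then g b else 0)
          * (∑' c, if r c then h c else 0)) := by
  calc (∑' a, ∑' b, ∑' c, if p a ∧ q b ∧ r c then f a * g b * h c else 0)
      = ∑' a, ∑' b, ∑' c, (if p a then f a else 0) *
          ((if q b then g b else 0) * (if r c then h c else 0)) := by
        refine tsum_congr fun a => tsum_congr fun b => tsum_congr fun c => ?_
        rw [mul_assoc, ind_mul_ind, ind_mul_ind]
    _ = _ := by
        simp only [ENNReal.tsum_mul_left, ENNReal.tsum_mul_right]

private lemma tsum_ind_mul₄ {α β γ δ : Type*} (f : α → ℝ≥0∞) (g : β → ℝ≥0∞) (h : γ → ℝ≥0∞)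
    (k : δ → ℝ≥0∞) (p : α → β → γ → Prop) [∀ a b c, Decidable (p a b c)]
    (q : δ → Prop) [DecidablePred q] :
    (∑' a, ∑' b, ∑' c, ∑' d, if p a b c ∧ q d then f a * g b * h c * k d else 0)
      = (∑' a, ∑' b, ∑' c, if p a b c then f a * g b * h c else 0)
          * (∑' d, if q d then k d else 0) := by
  calc (∑' a, ∑' b, ∑' c, ∑' d, if p a b c ∧ q d then f a * g b * h c * k d else 0)
      = ∑' a, ∑' b, ∑' c, ∑' d, (if p a b c then f a * g b * h c else 0) *
          (if q d then k d else 0) := by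
        refine tsum_congr fun a => tsum_congr fun b => tsum_congr fun c =>
          tsum_congr fun d => ?_
        rw [ind_mul_ind]
    _ = _ := by
        simp only [ENNReal.tsum_mul_left, ENNReal.tsum_mul_right]

private lemma sum_powerset_pow {α : Type*} [DecidableEq α] (x y : ℝ≥0∞) (s : Finset α) :
    ∑ t ∈ s.powerset, x ^ t.card * y ^ (s \ t).card = (x + y) ^ s.card := by
  calc ∑ t ∈ s.powerset, x ^ t.card * y ^ (s \ t).card
      = ∑ t ∈ s.powerset, (∏ _i ∈ t, x) * ∏ _i ∈ s \ t, y := by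
        simp [Finset.prod_const]
    _ = ∏ _i ∈ s, (x + y) := (Finset.prod_add _ _ _).symm
    _ = (x + y) ^ s.card := Finset.prod_const _

private lemma triple_union_bound {ι : Type*} [DecidableEq ι]
    (p₁ p₂ p₃ : ℝ) (hp₁ : 0 ≤ p₁) (hp₂ : 0 ≤ p₂) (hp₃ : 0 ≤ p₃)
    (μ₁ μ₂ μ₃ : PMF (Finset ι))
    (hμ₁ : LocallyDecaying μ₁ p₁) (hμ₂ : LocallyDecaying μ₂ p₂)
    (hμ₃ : LocallyDecaying μ₃ p₃) (B : Finset ι) :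
    (∑' SD : Finset ι, ∑' SA : Finset ι, ∑' F : Finset ι,
        if B ⊆ SD ∪ SA ∪ F then μ₁ SD * μ₂ SA * μ₃ F else 0)
      ≤ (ENNReal.ofReal p₁ + (ENNReal.ofReal p₂ + ENNReal.ofReal p₃)) ^ B.card := by
  have step : ∀ SD SA F : Finset ι,
      (if B ⊆ SD ∪ SA ∪ F then μ₁ SD * μ₂ SA * μ₃ F else 0)
        ≤ ∑ B₁ ∈ B.powerset, ∑ B₂ ∈ (B \ B₁).powerset,
            if B₁ ⊆ SD ∧ B₂ ⊆ SA ∧ (B \ B₁) \ B₂ ⊆ F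
            then μ₁ SD * μ₂ SA * μ₃ F else 0 := by
    intro SD SA F
    split_ifs with h
    · set B₁ := B ∩ SD with hB₁
      set B₂ := (B \ B₁) ∩ SA with hB₂
      have h1 : B₁ ∈ B.powerset := Finset.mem_powerset.2 Finset.inter_subset_left
      have h2 : B₂ ∈ (B \ B₁).powerset := Finset.mem_powerset.2 Finset.inter_subset_left
      have hcond : B₁ ⊆ SD ∧ B₂ ⊆ SA ∧ (B \ B₁) \ B₂ ⊆ F := by
        refine ⟨Finset.inter_subset_right, Finset.inter_subset_right, fun x hx => ?_⟩
        obtain ⟨hx1, hx2⟩ := Finset.mem_sdiff.1 hx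
        obtain ⟨hxB, hxB₁⟩ := Finset.mem_sdiff.1 hx1
        have hxSD : x ∉ SD := fun hsd => hxB₁ (Finset.mem_inter.2 ⟨hxB, hsd⟩)
        have hxSA : x ∉ SA := fun hsa => hx2 (Finset.mem_inter.2 ⟨hx1, hsa⟩)
        rcases Finset.mem_union.1 (h hxB) with h' | h'
        · rcases Finset.mem_union.1 h' with h'' | h''
          · exact absurd h'' hxSD
          · exact absurd h'' hxSA
        · exact h'
      calc μ₁ SD * μ₂ SA * μ₃ F
          = if B₁ ⊆ SD ∧ B₂ ⊆ SA ∧ (B \ B₁) \ B₂ ⊆ F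
            then μ₁ SD * μ₂ SA * μ₃ F else 0 := (if_pos hcond).symm
        _ ≤ ∑ B₂' ∈ (B \ B₁).powerset,
              if B₁ ⊆ SD ∧ B₂' ⊆ SA ∧ (B \ B₁) \ B₂' ⊆ F
              then μ₁ SD * μ₂ SA * μ₃ F else 0 :=
            Finset.single_le_sum
              (f := fun B₂' => if B₁ ⊆ SD ∧ B₂' ⊆ SA ∧ (B \ B₁) \ B₂' ⊆ F
                then μ₁ SD * μ₂ SA * μ₃ F else 0)
              (fun _ _ => zero_le) h2
        _ ≤ _ :=
            Finset.single_le_sum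
              (f := fun B₁' => ∑ B₂' ∈ (B \ B₁').powerset,
                if B₁' ⊆ SD ∧ B₂' ⊆ SA ∧ (B \ B₁') \ B₂' ⊆ F
                then μ₁ SD * μ₂ SA * μ₃ F else 0)
              (fun _ _ => zero_le) h1
    · exact zero_le
  calc (∑' SD : Finset ι, ∑' SA : Finset ι, ∑' F : Finset ι,
        if B ⊆ SD ∪ SA ∪ F then μ₁ SD * μ₂ SA * μ₃ F else 0)
      ≤ ∑' SD : Finset ι, ∑' SA : Finset ι, ∑' F : Finset ι,
          ∑ B₁ ∈ B.powerset, ∑ B₂ ∈ (B \ B₁).powerset,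
            if B₁ ⊆ SD ∧ B₂ ⊆ SA ∧ (B \ B₁) \ B₂ ⊆ F
            then μ₁ SD * μ₂ SA * μ₃ F else 0 :=
        ENNReal.tsum_le_tsum fun SD => ENNReal.tsum_le_tsum fun SA =>
          ENNReal.tsum_le_tsum fun F => step SD SA F
    _ = ∑ B₁ ∈ B.powerset, ∑ B₂ ∈ (B \ B₁).powerset,
          ∑' SD : Finset ι, ∑' SA : Finset ι, ∑' F : Finset ι,
            if B₁ ⊆ SD ∧ B₂ ⊆ SA ∧ (B \ B₁) \ B₂ ⊆ F
            then μ₁ SD * μ₂ SA * μ₃ F else 0 := by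
        simp only [tsum_finsetSum]
    _ = ∑ B₁ ∈ B.powerset, ∑ B₂ ∈ (B \ B₁).powerset,
          (∑' SD : Finset ι, if B₁ ⊆ SD then μ₁ SD else 0) *
            ((∑' SA : Finset ι, if B₂ ⊆ SA then μ₂ SA else 0) *
              (∑' F : Finset ι, if (B \ B₁) \ B₂ ⊆ F then μ₃ F else 0)) := by
        refine Finset.sum_congr rfl fun B₁ _ => Finset.sum_congr rfl fun B₂ _ => ?_
        exact tsum_ind_mul₃ _ _ _ _ _ _
    _ ≤ ∑ B₁ ∈ B.powerset, ∑ B₂ ∈ (B \ B₁).powerset,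
          (ENNReal.ofReal p₁) ^ B₁.card *
            ((ENNReal.ofReal p₂) ^ B₂.card *
              (ENNReal.ofReal p₃) ^ ((B \ B₁) \ B₂).card) := by
        refine Finset.sum_le_sum fun B₁ _ => Finset.sum_le_sum fun B₂ _ => ?_
        refine mul_le_mul' ?_ (mul_le_mul' ?_ ?_)
        · simpa [ENNReal.ofReal_pow hp₁] using hμ₁ B₁
        · simpa [ENNReal.ofReal_pow hp₂] using hμ₂ B₂
        · simpa [ENNReal.ofReal_pow hp₃] using hμ₃ ((B \ B₁) \ B₂)
    _ = ∑ B₁ ∈ B.powerset, (ENNReal.ofReal p₁) ^ B₁.card *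
          (ENNReal.ofReal p₂ + ENNReal.ofReal p₃) ^ (B \ B₁).card := by
        refine Finset.sum_congr rfl fun B₁ _ => ?_
        rw [← Finset.mul_sum, sum_powerset_pow]
    _ = _ := sum_powerset_pow _ _ _

/-- **Lemma 1: error propagation through the transversal Bell measurement circuit.**
The qubits of the two code blocks are modeled as `ι × Bool`.  With independent
locally decaying random subsets `S_D, S_A, F ⊆ ι` of rates `p₁, p₂, p₃ ≥ 0`
(`p₁ + p₂ + p₃ ≤ 1`) and an independent locally decaying measurement-error
support `S_M ⊆ ι × Bool` of rate `p₄ ≥ 0`, the total output error support is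
contained in `S = ((S_D ∪ S_A ∪ F) ×ˢ {false, true}) ∪ S_M`, and for every
finite `E ⊆ ι × Bool` the probability that `E ⊆ S` is at most
`(√(p₁ + p₂ + p₃) + p₄) ^ |E|`; i.e. the effective noise rate is
`p_eff = √(p₁ + p₂ + p₃) + p₄`. -/
theorem locallyDecaying_knill_bell_measurement {ι : Type*} [DecidableEq ι]
    (p₁ p₂ p₃ p₄ : ℝ) (hp₁ : 0 ≤ p₁) (hp₂ : 0 ≤ p₂) (hp₃ : 0 ≤ p₃) (hp₄ : 0 ≤ p₄)
    (hsum : p₁ + p₂ + p₃ ≤ 1)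
    (μ₁ μ₂ μ₃ : PMF (Finset ι)) (μ₄ : PMF (Finset (ι × Bool)))
    (hμ₁ : LocallyDecaying μ₁ p₁) (hμ₂ : LocallyDecaying μ₂ p₂)
    (hμ₃ : LocallyDecaying μ₃ p₃) (hμ₄ : LocallyDecaying μ₄ p₄) :
    ∀ E : Finset (ι × Bool),
      (∑' SD : Finset ι, ∑' SA : Finset ι, ∑' F : Finset ι,
          ∑' SM : Finset (ι × Bool),
          if E ⊆ ((SD ∪ SA ∪ F) ×ˢ ({false, true} : Finset Bool)) ∪ SM
          then μ₁ SD * μ₂ SA * μ₃ F * μ₄ SM else 0)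
        ≤ ENNReal.ofReal ((Real.sqrt (p₁ + p₂ + p₃) + p₄) ^ E.card) := by
  intro E
  set q : ℝ := p₁ + p₂ + p₃ with hq
  have hq0 : 0 ≤ q := by positivity
  set s : ℝ := Real.sqrt q with hs
  have hs0 : 0 ≤ s := Real.sqrt_nonneg q
  set sE : ℝ≥0∞ := ENNReal.ofReal s with hsE
  set q₄ : ℝ≥0∞ := ENNReal.ofReal p₄ with hq₄
  -- pointwise union bound over the subset of `E` explained by measurement errors
  have step1 : ∀ (SD SA F : Finset ι) (SM : Finset (ι × Bool)),
      (if E ⊆ ((SD ∪ SA ∪ F) ×ˢ ({false, true} : Finset Bool)) ∪ SM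
        then μ₁ SD * μ₂ SA * μ₃ F * μ₄ SM else 0)
      ≤ ∑ E₁ ∈ E.powerset,
          if (E \ E₁).image Prod.fst ⊆ SD ∪ SA ∪ F ∧ E₁ ⊆ SM
          then μ₁ SD * μ₂ SA * μ₃ F * μ₄ SM else 0 := by
    intro SD SA F SM
    split_ifs with h
    · have hmem : E ∩ SM ∈ E.powerset := Finset.mem_powerset.2 Finset.inter_subset_left
      have hcond : (E \ (E ∩ SM)).image Prod.fst ⊆ SD ∪ SA ∪ F ∧ E ∩ SM ⊆ SM := by
        refine ⟨fun i hi => ?_, Finset.inter_subset_right⟩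
        obtain ⟨e, he, rfl⟩ := Finset.mem_image.1 hi
        obtain ⟨heE, heI⟩ := Finset.mem_sdiff.1 he
        rcases Finset.mem_union.1 (h heE) with h' | h'
        · exact (Finset.mem_product.1 h').1
        · exact absurd (Finset.mem_inter.2 ⟨heE, h'⟩) heI
      calc μ₁ SD * μ₂ SA * μ₃ F * μ₄ SM
          = if (E \ (E ∩ SM)).image Prod.fst ⊆ SD ∪ SA ∪ F ∧ E ∩ SM ⊆ SM
            then μ₁ SD * μ₂ SA * μ₃ F * μ₄ SM else 0 := (if_pos hcond).symm
        _ ≤ _ :=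
            Finset.single_le_sum
              (f := fun E₁ => if (E \ E₁).image Prod.fst ⊆ SD ∪ SA ∪ F ∧ E₁ ⊆ SM
                then μ₁ SD * μ₂ SA * μ₃ F * μ₄ SM else 0)
              (fun _ _ => zero_le) hmem
    · exact zero_le
  -- bound for each term of the union bound
  have key : ∀ E₁ ∈ E.powerset,
      (∑' SD : Finset ι, ∑' SA : Finset ι, ∑' F : Finset ι,
          if (E \ E₁).image Prod.fst ⊆ SD ∪ SA ∪ F
          then μ₁ SD * μ₂ SA * μ₃ F else 0)
        * (∑' SM : Finset (ι × Bool), if E₁ ⊆ SM then μ₄ SM else 0)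
      ≤ q₄ ^ E₁.card * sE ^ (E \ E₁).card := by
    intro E₁ _
    rw [mul_comm]
    refine mul_le_mul' ?_ ?_
    · simpa [hq₄, ENNReal.ofReal_pow hp₄] using hμ₄ E₁
    · refine le_trans (triple_union_bound p₁ p₂ p₃ hp₁ hp₂ hp₃ μ₁ μ₂ μ₃ hμ₁ hμ₂ hμ₃ _) ?_
      have hqs : ENNReal.ofReal p₁ + (ENNReal.ofReal p₂ + ENNReal.ofReal p₃) = sE * sE := by
        rw [hsE, ← ENNReal.ofReal_mul hs0, Real.mul_self_sqrt hq0,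
          ← ENNReal.ofReal_add hp₂ hp₃, ← ENNReal.ofReal_add hp₁ (by positivity), hq, ← add_assoc]
      rw [hqs, ← sq, ← pow_mul]
      have hsE1 : sE ≤ 1 := by
        rw [hsE, hs]
        calc ENNReal.ofReal (Real.sqrt q) ≤ ENNReal.ofReal 1 :=
              ENNReal.ofReal_le_ofReal (Real.sqrt_le_one.mpr hsum)
          _ = 1 := ENNReal.ofReal_one
      refine pow_le_pow_of_le_one (zero_le) hsE1 ?_
      -- each fiber of `Prod.fst` on `E \ E₁` has at most two elements
      have := Finset.card_le_mul_card_image (f := Prod.fst) (E \ E₁) 2 ?_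
      · omega
      · intro b _
        calc ((E \ E₁).filter fun x => x.1 = b).card
            ≤ ({(b, false), (b, true)} : Finset (ι × Bool)).card := by
              refine Finset.card_le_card fun x hx => ?_
              obtain ⟨-, hx2⟩ := Finset.mem_filter.1 hx
              have : x = (b, x.2) := by
                rw [← hx2]
              rcases Bool.dichotomy x.2 with h2 | h2 <;>
                simp [Finset.mem_insert, Prod.ext_iff, ← hx2, h2]
          _ ≤ 2 := by
              apply le_trans (Finset.card_insert_le _ _)
              simp
  calc (∑' SD : Finset ι, ∑' SA : Finset ι, ∑' F : Finset ι,
          ∑' SM : Finset (ι × Bool),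
          if E ⊆ ((SD ∪ SA ∪ F) ×ˢ ({false, true} : Finset Bool)) ∪ SM
          then μ₁ SD * μ₂ SA * μ₃ F * μ₄ SM else 0)
      ≤ ∑' SD : Finset ι, ∑' SA : Finset ι, ∑' F : Finset ι,
          ∑' SM : Finset (ι × Bool), ∑ E₁ ∈ E.powerset,
          if (E \ E₁).image Prod.fst ⊆ SD ∪ SA ∪ F ∧ E₁ ⊆ SM
          then μ₁ SD * μ₂ SA * μ₃ F * μ₄ SM else 0 :=
        ENNReal.tsum_le_tsum fun SD => ENNReal.tsum_le_tsum fun SA =>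
          ENNReal.tsum_le_tsum fun F => ENNReal.tsum_le_tsum fun SM => step1 SD SA F SM
    _ = ∑ E₁ ∈ E.powerset, ∑' SD : Finset ι, ∑' SA : Finset ι, ∑' F : Finset ι,
          ∑' SM : Finset (ι × Bool),
          if (E \ E₁).image Prod.fst ⊆ SD ∪ SA ∪ F ∧ E₁ ⊆ SM
          then μ₁ SD * μ₂ SA * μ₃ F * μ₄ SM else 0 := by
        simp only [tsum_finsetSum]
    _ = ∑ E₁ ∈ E.powerset,
          (∑' SD : Finset ι, ∑' SA : Finset ι, ∑' F : Finset ι,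
            if (E \ E₁).image Prod.fst ⊆ SD ∪ SA ∪ F
            then μ₁ SD * μ₂ SA * μ₃ F else 0)
          * (∑' SM : Finset (ι × Bool), if E₁ ⊆ SM then μ₄ SM else 0) := by
        refine Finset.sum_congr rfl fun E₁ _ => ?_
        exact tsum_ind_mul₄ _ _ _ _ _ _
    _ ≤ ∑ E₁ ∈ E.powerset, q₄ ^ E₁.card * sE ^ (E \ E₁).card :=
        Finset.sum_le_sum key
    _ = (q₄ + sE) ^ E.card := sum_powerset_pow _ _ _
    _ = ENNReal.ofReal ((s + p₄) ^ E.card) := by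
        rw [ENNReal.ofReal_pow (by positivity), ENNReal.ofReal_add hs0 hp₄, add_comm]
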